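/- Let D_x be the derivation with D_x(y_k) = y_{k+1} on polynomials in y3,...,y8. Define R5 = 3*y3*y5 - 5*y4^2, R6 = 9*y3^2*y6 - 45*y3*y4*y5 + 40*y4^3, R7 = 9*y3^3*y7 - 63*y3^2*y4*y6 + 105*y3*y4^2*y5 - 35*y4^4, and R8 = 9*y3^4*y8 - 84*y3^3*y4*y7 + 210*y3^2*y4^2*y6 - 105*y3^2*y4*y5^2 + 210*y3*y4^3*y5 - 280*y4^5. Then y3*D_x(R7) - (16/3)*y4*R7 = R8 - (7/3)*R5*R6. -/

import Mathlib

/-- The identity `∇₁₆ R₇ = R₈ − (7/3) R₅ R₆` for the weight-16 relative invariant derivation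
`∇₁₆ = y₃ D_x − (16/3) y₄`, where `D_x` is any derivation with `D_x yₖ = y_{k+1}`. -/
theorem nabla16_R7 {A : Type*} [CommRing A] [Algebra ℚ A] (D : Derivation ℚ A A)
    (y3 y4 y5 y6 y7 y8 : A) (h3 : D y3 = y4) (h4 : D y4 = y5) (h5 : D y5 = y6)
    (h6 : D y6 = y7) (h7 : D y7 = y8) :
    y3 * D (9 * y3 ^ 3 * y7 - 63 * y3 ^ 2 * y4 * y6 + 105 * y3 * y4 ^ 2 * y5 - 35 * y4 ^ 4)
      - (16 / 3 : ℚ) • (y4 *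
          (9 * y3 ^ 3 * y7 - 63 * y3 ^ 2 * y4 * y6 + 105 * y3 * y4 ^ 2 * y5 - 35 * y4 ^ 4))
      = (9 * y3 ^ 4 * y8 - 84 * y3 ^ 3 * y4 * y7 + 210 * y3 ^ 2 * y4 ^ 2 * y6
          - 105 * y3 ^ 2 * y4 * y5 ^ 2 + 210 * y3 * y4 ^ 3 * y5 - 280 * y4 ^ 5)
        - (7 / 3 : ℚ) • ((3 * y3 * y5 - 5 * y4 ^ 2)
            * (9 * y3 ^ 2 * y6 - 45 * y3 * y4 * y5 + 40 * y4 ^ 3)) := by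
  have hc : ∀ n : ℕ, D (OfNat.ofNat (n+2) : A) = 0 := by
    intro n
    have : ((OfNat.ofNat (n+2) : ℕ) : A) = (OfNat.ofNat (n+2) : A) := by
      simp [Nat.cast_ofNat]
    rw [← this, ← map_natCast (algebraMap ℚ A)]
    exact Derivation.map_algebraMap D _
  apply smul_right_injective A (r := (3:ℚ)) (by norm_num)
  simp only [map_sub, map_add, Derivation.leibniz, Derivation.leibniz_pow, h3, h4, h5, h6, h7,
    hc, smul_eq_mul, zero_mul, mul_zero, zero_add, add_zero, nsmul_eq_mul,
    smul_sub, smul_smul]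
  norm_num
  have e : ∀ (q : ℚ) (x : A), (q:ℚ) • x = algebraMap ℚ A q * x := fun q x => Algebra.smul_def q x
  simp only [e]
  simp only [map_ofNat]
  ring
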